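/- Let A be a unital C*-algebra and x a positive element of A with infinite spectrum. Then there exists a sequence (α_i) of positive elements in the C*-subalgebra generated by x such that ‖α_i‖ = 1 for all i, 0 ≤ α_i ≤ 1, and for every n the partial sum α_1 + ... + α_n ≤ 1. -/

import Mathlib

open scoped Finset

/-- Auxiliary recursively defined sequence of points of `S` approaching `x₀`. -/
private noncomputable def accSeqAux {S : Set ℝ} {x₀ : ℝ}
    (T : ∀ ε : ℝ, 0 < ε → {y : ℝ // y ∈ S ∧ y ≠ x₀}) : ℕ → {y : ℝ // y ∈ S ∧ y ≠ x₀}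
  | 0 => T 1 one_pos
  | n + 1 => T (|(accSeqAux T n).1 - x₀| / 2)
      (half_pos (abs_pos.mpr (sub_ne_zero.mpr (accSeqAux T n).2.2)))

private lemma exists_acc_seq {S : Set ℝ} {x₀ : ℝ} (h : AccPt x₀ (Filter.principal S)) :
    ∃ t : ℕ → ℝ, (∀ n, t n ∈ S) ∧ (∀ n, t n ≠ x₀) ∧
      ∀ n, |t (n + 1) - x₀| < |t n - x₀| / 2 := by
  rw [accPt_iff_nhds] at h
  have key : ∀ ε : ℝ, 0 < ε → ∃ y : {y : ℝ // y ∈ S ∧ y ≠ x₀}, |y.1 - x₀| < ε := by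
    intro ε hε
    obtain ⟨y, ⟨hyU, hyS⟩, hyne⟩ := h (Metric.ball x₀ ε) (Metric.ball_mem_nhds _ hε)
    exact ⟨⟨y, hyS, hyne⟩, by simpa [Real.dist_eq] using hyU⟩
  choose T hT using key
  refine ⟨fun n => (accSeqAux T n).1, fun n => (accSeqAux T n).2.1,
    fun n => (accSeqAux T n).2.2, fun n => ?_⟩
  exact hT _ _

/-- If `A` is a unital C*-algebra and `x` is a positive element of `A`
with infinite spectrum, then there is a sequence `α i` of positive elements of the
C*-subalgebra generated by `x` with `‖α i‖ = 1`, `0 ≤ α i ≤ 1`, and all partial sums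
`α 0 + ⋯ + α (n-1) ≤ 1`. -/
theorem stmt0 {A : Type} [CStarAlgebra A] [PartialOrder A] [StarOrderedRing A] (x : A) (hx : 0 ≤ x)
    (hspec : (spectrum ℂ x).Infinite) :
    ∃ α : ℕ → A,
      (∀ i, α i ∈ StarAlgebra.elemental ℂ x) ∧
      (∀ i, ‖α i‖ = 1) ∧
      (∀ i, 0 ≤ α i) ∧
      (∀ i, α i ≤ 1) ∧
      (∀ n : ℕ, ∑ i ∈ Finset.range n, α i ≤ 1) := by
  have hsa : IsSelfAdjoint x := hx.isSelfAdjoint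
  have hres : SpectrumRestricts x Complex.reCLM := hsa.quasispectrumRestricts
  -- the real spectrum is infinite
  have hsR : (spectrum ℝ x).Infinite := by
    refine Set.Infinite.of_image (algebraMap ℝ ℂ) ?_
    rwa [hres.algebraMap_image]
  -- find an accumulation point and a sequence approaching it rapidly
  obtain ⟨x₀, -, hacc⟩ :=
    hsR.exists_accPt_of_subset_isCompact (spectrum.isCompact x) (subset_refl _)
  obtain ⟨t, htS, htne, htlt⟩ := exists_acc_seq hacc
  set d : ℕ → ℝ := fun n => |t n - x₀| with hd
  have hd0 : ∀ n, 0 < d n := fun n => abs_pos.mpr (sub_ne_zero.mpr (htne n))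
  have hdh : ∀ n, d (n + 1) < d n / 2 := htlt
  have hdanti : ∀ {n m : ℕ}, n ≤ m → d m ≤ d n := by
    intro n m hnm
    exact antitone_nat_of_succ_le (fun k => (hdh k).le.trans (half_le_self (hd0 k).le)) hnm
  -- the bump functions
  set f : ℕ → ℝ → ℝ := fun n s => max 0 (1 - |(|s - x₀|) - d n| / (d n / 4)) with hf
  have hcont : ∀ n, Continuous (f n) := by
    intro n
    apply Continuous.max continuous_const
    fun_prop
  have hnonneg : ∀ n s, 0 ≤ f n s := fun n s => le_max_left _ _
  have hle_one : ∀ n s, f n s ≤ 1 := by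
    intro n s
    refine max_le zero_le_one ?_
    have : 0 ≤ |(|s - x₀|) - d n| / (d n / 4) := by positivity
    linarith
  have hval : ∀ n, f n (t n) = 1 := by
    intro n
    simp only [hf, hd]
    rw [sub_self, abs_zero, zero_div, sub_zero]
    exact max_eq_right zero_le_one
  have hpos_imp : ∀ n s, 0 < f n s → |(|s - x₀|) - d n| < d n / 4 := by
    intro n s hs
    have h1 : 0 < 1 - |(|s - x₀|) - d n| / (d n / 4) := by
      have hs' : (0 : ℝ) < max 0 (1 - |(|s - x₀|) - d n| / (d n / 4)) := hs
      rcases lt_max_iff.mp hs' with h | h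
      · exact absurd h (lt_irrefl 0)
      · exact h
    have h4 : (0 : ℝ) < d n / 4 := by have := hd0 n; linarith
    rw [sub_pos, div_lt_one h4] at h1
    exact h1
  -- disjointness of the bumps
  have hdisj : ∀ s n m, n < m → 0 < f n s → 0 < f m s → False := by
    intro s n m hnm hn hm
    have h1 := hpos_imp n s hn
    have h2 := hpos_imp m s hm
    have h3 : d m ≤ d (n + 1) := hdanti hnm
    have h4 := hdh n
    have h5 := hd0 n
    have h6 := hd0 m
    rw [abs_lt] at h1 h2
    -- r > 3/4 d n  and  r < 5/4 d m < 5/8 d n < 3/4 d n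
    have := h1.1
    have := h2.2
    linarith
  -- pointwise sum bound
  have hsum_pt : ∀ n s, ∑ i ∈ Finset.range n, f i s ≤ 1 := by
    intro n s
    by_cases hall : ∀ i ∈ Finset.range n, f i s = 0
    · rw [Finset.sum_eq_zero hall]; exact zero_le_one
    · push_neg at hall
      obtain ⟨i₀, hi₀mem, hi₀⟩ := hall
      have hi₀pos : 0 < f i₀ s := lt_of_le_of_ne (hnonneg i₀ s) (Ne.symm hi₀)
      rw [Finset.sum_eq_single i₀ ?h₀ ?h₁]
      · exact hle_one i₀ s
      case h₀ =>
        intro j _ hj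
        by_contra hjne
        have hjpos : 0 < f j s := lt_of_le_of_ne (hnonneg j s) (Ne.symm hjne)
        rcases lt_or_gt_of_ne hj with h | h
        · exact hdisj s j i₀ h hjpos hi₀pos
        · exact hdisj s i₀ j h hi₀pos hjpos
      case h₁ =>
        intro hcon
        exact absurd hi₀mem hcon
  have hcontOn : ∀ n, ContinuousOn (f n) (spectrum ℝ x) := fun n => (hcont n).continuousOn
  refine ⟨fun n => cfc (f n) x, ?_, ?_, ?_, ?_, ?_⟩
  · -- membership in the elemental algebra
    intro n
    show cfc (f n) x ∈ StarAlgebra.elemental ℂ x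
    rw [cfc_real_eq_complex (f n) hsa]
    have hg : ContinuousOn (fun z : ℂ => (f n z.re : ℂ)) (spectrum ℂ x) := by
      apply Continuous.continuousOn
      exact Complex.continuous_ofReal.comp ((hcont n).comp Complex.continuous_re)
    rw [cfc_apply (fun z : ℂ => (f n z.re : ℂ)) x hsa.isStarNormal hg,
      cfcHom_eq_of_isStarNormal]
    exact SetLike.coe_mem _
  · -- norm = 1
    intro n
    refine le_antisymm (norm_cfc_le zero_le_one fun s _ => ?_) ?_
    · rw [Real.norm_eq_abs, abs_of_nonneg (hnonneg n s)]
      exact hle_one n s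
    · have := norm_apply_le_norm_cfc (f n) x (htS n) (hcontOn n) hsa
      rwa [hval n, norm_one] at this
  · -- nonneg
    intro n
    exact cfc_nonneg fun s _ => hnonneg n s
  · -- ≤ 1
    intro n
    exact cfc_le_one (f n) x fun s _ => hle_one n s
  · -- partial sums ≤ 1
    intro n
    show ∑ i ∈ Finset.range n, cfc (f i) x ≤ 1
    rw [← cfc_sum (fun i => f i) x (Finset.range n) (fun i _ => hcontOn i)]
    refine cfc_le_one _ x fun s _ => ?_
    rw [Finset.sum_apply]
    exact hsum_pt n s
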